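/- Let μ_1,…,μ_K ∈ ℝ^d be points whose pairwise distances satisfy ‖μ_i−μ_j‖ ≥ 2q for i ≠ j, where q ≥ h/ρ for some h > 0 and ρ ≥ 1, and fix C_Σ > 0 and m ≥ 0. Then there exists a constant C depending only on d, m, ρ, C_Σ such that for every x ∈ ℝ^d, Σ_{k=1}^K exp(−‖x−μ_k‖²/(2 C_Σ h²)) ‖x−μ_k‖^m ≤ C h^m. -/

import Mathlib

open MeasureTheory Metric Real GaussianFourier

lemma aux_rpow_le_exp {c m : ℝ} (hc : 0 < c) (hm : 0 ≤ m) :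
    ∃ C : ℝ, 0 < C ∧ ∀ s : ℝ, 0 ≤ s → s ^ m ≤ C * Real.exp (s ^ 2 / c) := by
  set n := ⌈m⌉₊ with hn
  refine ⟨max 1 (c ^ n * n.factorial), lt_max_of_lt_left one_pos, fun s hs => ?_⟩
  have hexp : (1:ℝ) ≤ Real.exp (s ^ 2 / c) := Real.one_le_exp (by positivity)
  rcases le_total s 1 with h1 | h1
  · calc s ^ m ≤ 1 := Real.rpow_le_one hs h1 hm
      _ ≤ max 1 (c ^ n * n.factorial) * Real.exp (s ^ 2 / c) := by
        nlinarith [le_max_left (1:ℝ) (c ^ n * n.factorial)]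
  · have h2 : s ^ m ≤ s ^ (n : ℝ) :=
      Real.rpow_le_rpow_of_exponent_le h1 (Nat.le_ceil m)
    rw [Real.rpow_natCast] at h2
    have h3 : s ^ n ≤ (s ^ 2) ^ n := by
      rw [← pow_mul]
      exact pow_le_pow_right₀ h1 (by omega)
    have h4 : (s ^ 2 / c) ^ n / n.factorial ≤ Real.exp (s ^ 2 / c) :=
      Real.pow_div_factorial_le_exp (x := s ^ 2 / c) (by positivity) n
    have h5 : (s ^ 2) ^ n ≤ c ^ n * n.factorial * Real.exp (s ^ 2 / c) := by
      rw [div_pow] at h4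
      have hcn : (0:ℝ) < c ^ n := by positivity
      have hfn : (0:ℝ) < (n.factorial : ℝ) := by positivity
      calc (s ^ 2) ^ n = ((s ^ 2) ^ n / c ^ n / n.factorial) * (c ^ n * n.factorial) := by
            field_simp
        _ ≤ Real.exp (s ^ 2 / c) * (c ^ n * n.factorial) :=
            mul_le_mul_of_nonneg_right h4 (by positivity)
        _ = c ^ n * n.factorial * Real.exp (s ^ 2 / c) := by ring
    calc s ^ m ≤ (s ^ 2) ^ n := le_trans h2 h3
      _ ≤ c ^ n * n.factorial * Real.exp (s ^ 2 / c) := h5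
      _ ≤ max 1 (c ^ n * n.factorial) * Real.exp (s ^ 2 / c) :=
          mul_le_mul_of_nonneg_right (le_max_right _ _) (Real.exp_pos _).le

set_option maxHeartbeats 1000000 in
lemma sum_gaussian_le {d K : ℕ} (μ : Fin K → EuclideanSpace ℝ (Fin d)) {r b : ℝ}
    (hr : 0 < r) (hb : 0 < b)
    (hsep : ∀ i j, i ≠ j → 2 * r ≤ ‖μ i - μ j‖) (x : EuclideanSpace ℝ (Fin d)) :
    ∑ k, Real.exp (-b * ‖x - μ k‖ ^ 2)
      ≤ Real.exp (b * r ^ 2) * (π / (b / 2)) ^ ((d : ℝ) / 2)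
        / (r ^ d * (volume (ball (0 : EuclideanSpace ℝ (Fin d)) 1)).toReal) := by
  set κ := (volume (ball (0 : EuclideanSpace ℝ (Fin d)) 1)).toReal with hκ
  have hκpos : 0 < κ :=
    ENNReal.toReal_pos (measure_ball_pos volume 0 one_pos).ne' measure_ball_lt_top.ne
  set g : EuclideanSpace ℝ (Fin d) → ℝ := fun y => Real.exp (-(b / 2) * ‖x - y‖ ^ 2) with hg
  have hbase : Integrable (fun z : EuclideanSpace ℝ (Fin d) => Real.exp (-(b / 2) * ‖z‖ ^ 2)) := by
    have h := (integrable_cexp_neg_mul_sq_norm_add (V := EuclideanSpace ℝ (Fin d)) (b := ((b / 2 : ℝ) : ℂ))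
      (by simpa using half_pos hb) 0 (0 : EuclideanSpace ℝ (Fin d))).re
    refine h.congr (Filter.Eventually.of_forall fun v => ?_)
    have h2 : -((b / 2 : ℝ) : ℂ) * (‖v‖ : ℂ) ^ 2 + 0 * ((inner ℝ (0 : EuclideanSpace ℝ (Fin d)) v : ℝ) : ℂ)
        = ((-(b / 2) * ‖v‖ ^ 2 : ℝ) : ℂ) := by push_cast; ring
    simp only [h2, RCLike.re_to_complex, Complex.exp_ofReal_re]
  have hgint : Integrable g := by
    have h := hbase.comp_sub_left x
    simpa [hg] using h
  have hgval : ∫ y, g y = (π / (b / 2)) ^ ((d : ℝ) / 2) := by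
    have h1 : ∫ y, g y = ∫ z : EuclideanSpace ℝ (Fin d), Real.exp (-(b / 2) * ‖z‖ ^ 2) := by
      exact integral_sub_left_eq_self
        (fun z : EuclideanSpace ℝ (Fin d) => Real.exp (-(b / 2) * ‖z‖ ^ 2)) volume x
    rw [h1, integral_rexp_neg_mul_sq_norm (half_pos hb), finrank_euclideanSpace_fin]
  have hVone : ∀ k : Fin K, (volume (ball (μ k) r)).toReal = r ^ d * κ := by
    intro k
    rw [Measure.addHaar_ball_of_pos volume (μ k) hr, finrank_euclideanSpace_fin,
      ENNReal.toReal_mul, ENNReal.toReal_ofReal (by positivity)]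
  have key : ∀ k : Fin K,
      Real.exp (-b * ‖x - μ k‖ ^ 2) * (r ^ d * κ)
        ≤ Real.exp (b * r ^ 2) * ∫ y in ball (μ k) r, g y := by
    intro k
    have hlow : ∀ y ∈ ball (μ k) r,
        Real.exp (-b * ‖x - μ k‖ ^ 2 - b * r ^ 2) ≤ g y := by
      intro y hy
      have h1 : ‖y - μ k‖ < r := by
        rw [← dist_eq_norm]; exact mem_ball.mp hy
      have hxy : ‖x - y‖ ≤ ‖x - μ k‖ + r := by
        calc ‖x - y‖ = ‖(x - μ k) + (μ k - y)‖ := by rw [sub_add_sub_cancel]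
          _ ≤ ‖x - μ k‖ + ‖μ k - y‖ := norm_add_le _ _
          _ ≤ ‖x - μ k‖ + r := by
            have h2 : ‖μ k - y‖ < r := by rw [norm_sub_rev]; exact h1
            linarith
      have hsq : ‖x - y‖ ^ 2 ≤ 2 * ‖x - μ k‖ ^ 2 + 2 * r ^ 2 := by
        have hsq1 : ‖x - y‖ ^ 2 ≤ (‖x - μ k‖ + r) ^ 2 :=
          pow_le_pow_left₀ (norm_nonneg _) hxy 2
        nlinarith [sq_nonneg (‖x - μ k‖ - r)]
      simp only [hg]
      apply Real.exp_le_exp.mpr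
      nlinarith
    have hexpeq : Real.exp (b * r ^ 2) * Real.exp (-b * ‖x - μ k‖ ^ 2 - b * r ^ 2)
        = Real.exp (-b * ‖x - μ k‖ ^ 2) := by
      rw [← Real.exp_add]; ring_nf
    calc Real.exp (-b * ‖x - μ k‖ ^ 2) * (r ^ d * κ)
        = Real.exp (b * r ^ 2) *
            (Real.exp (-b * ‖x - μ k‖ ^ 2 - b * r ^ 2) * (volume (ball (μ k) r)).toReal) := by
          rw [hVone k, ← hexpeq]; ring
      _ ≤ Real.exp (b * r ^ 2) * ∫ y in ball (μ k) r, g y := by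
          refine mul_le_mul_of_nonneg_left ?_ (Real.exp_pos _).le
          exact setIntegral_ge_of_const_le_real measurableSet_ball measure_ball_lt_top.ne hlow
            hgint.integrableOn
  have hdisj : Pairwise (Function.onFun Disjoint fun k : Fin K => ball (μ k) r) := by
    intro i j hij
    exact ball_disjoint_ball (by rw [dist_eq_norm]; linarith [hsep i j hij])
  have hsum : ∑ k, ∫ y in ball (μ k) r, g y ≤ ∫ y, g y := by
    rw [← integral_iUnion_fintype (fun k => measurableSet_ball) hdisj
      (fun k => hgint.integrableOn)]
    exact setIntegral_le_integral hgint
      (Filter.Eventually.of_forall fun y => (Real.exp_pos _).le)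
  have main : (∑ k, Real.exp (-b * ‖x - μ k‖ ^ 2)) * (r ^ d * κ)
      ≤ Real.exp (b * r ^ 2) * (π / (b / 2)) ^ ((d : ℝ) / 2) := by
    rw [Finset.sum_mul]
    calc ∑ k, Real.exp (-b * ‖x - μ k‖ ^ 2) * (r ^ d * κ)
        ≤ ∑ k, Real.exp (b * r ^ 2) * ∫ y in ball (μ k) r, g y :=
          Finset.sum_le_sum fun k _ => key k
      _ = Real.exp (b * r ^ 2) * ∑ k, ∫ y in ball (μ k) r, g y := by rw [Finset.mul_sum]
      _ ≤ Real.exp (b * r ^ 2) * ∫ y, g y :=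
          mul_le_mul_of_nonneg_left hsum (Real.exp_pos _).le
      _ = _ := by rw [hgval]
  rw [le_div_iff₀ (by positivity)]
  exact main

/-- **Gaussian moment sum bound for separated points.** If the points
`μ₁,…,μ_K ∈ ℝ^d` are `2q`-separated with `q ≥ h/ρ`, then for any `m ≥ 0`,
`∑ₖ exp(−‖x−μₖ‖²/(2C_Σh²)) ‖x−μₖ‖ᵐ ≤ C hᵐ` uniformly in `x`, with `C` depending only on
`d, m, ρ, C_Σ`. -/
theorem separated_gaussian_moment_sum
    (d : ℕ) (m ρ CSig : ℝ) (hm : 0 ≤ m) (hρ : 1 ≤ ρ) (hCSig : 0 < CSig) :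
    ∃ C : ℝ, ∀ (K : ℕ) (μ : Fin K → EuclideanSpace ℝ (Fin d)) (h q : ℝ),
      0 < h → h / ρ ≤ q →
      (∀ i j, i ≠ j → 2 * q ≤ ‖μ i - μ j‖) →
      ∀ x : EuclideanSpace ℝ (Fin d),
        ∑ k, Real.exp (-‖x - μ k‖ ^ 2 / (2 * CSig * h ^ 2)) * ‖x - μ k‖ ^ m
          ≤ C * h ^ m := by
  obtain ⟨C₁, hC₁pos, hC₁⟩ := aux_rpow_le_exp (c := 4 * CSig) (by positivity) hm
  set κ := (volume (ball (0 : EuclideanSpace ℝ (Fin d)) 1)).toReal with hκ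
  have hκpos : 0 < κ :=
    ENNReal.toReal_pos (measure_ball_pos volume 0 one_pos).ne' measure_ball_lt_top.ne
  refine ⟨C₁ * (Real.exp (1 / (4 * CSig * ρ ^ 2)) * (8 * π * CSig) ^ ((d : ℝ) / 2)
    * ρ ^ d / κ), ?_⟩
  intro K μ h q hh hq hsep x
  have hρ0 : 0 < ρ := lt_of_lt_of_le one_pos hρ
  set r : ℝ := h / ρ with hrdef
  have hr : 0 < r := by positivity
  set b : ℝ := 1 / (4 * CSig * h ^ 2) with hbdef
  have hb : 0 < b := by positivity
  have hsep' : ∀ i j : Fin K, i ≠ j → 2 * r ≤ ‖μ i - μ j‖ := fun i j hij =>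
    le_trans (by linarith) (hsep i j hij)
  have step1 : ∀ k : Fin K,
      Real.exp (-‖x - μ k‖ ^ 2 / (2 * CSig * h ^ 2)) * ‖x - μ k‖ ^ m
        ≤ C₁ * h ^ m * Real.exp (-b * ‖x - μ k‖ ^ 2) := by
    intro k
    have ht0 : (0:ℝ) ≤ ‖x - μ k‖ := norm_nonneg _
    have h1 : ‖x - μ k‖ ^ m ≤ C₁ * Real.exp (b * ‖x - μ k‖ ^ 2) * h ^ m := by
      have h2 : (‖x - μ k‖ / h) ^ m
          ≤ C₁ * Real.exp ((‖x - μ k‖ / h) ^ 2 / (4 * CSig)) := hC₁ _ (by positivity)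
      have h3 : (‖x - μ k‖ / h) ^ 2 / (4 * CSig) = b * ‖x - μ k‖ ^ 2 := by
        rw [hbdef, div_pow, div_div, one_div, inv_mul_eq_div]; ring
      rw [h3] at h2
      have h4 : ‖x - μ k‖ ^ m = (‖x - μ k‖ / h) ^ m * h ^ m := by
        rw [← Real.mul_rpow (by positivity) hh.le, div_mul_cancel₀ _ (ne_of_gt hh)]
      rw [h4]
      exact mul_le_mul_of_nonneg_right h2 (Real.rpow_nonneg hh.le m)
    calc Real.exp (-‖x - μ k‖ ^ 2 / (2 * CSig * h ^ 2)) * ‖x - μ k‖ ^ m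
        ≤ Real.exp (-‖x - μ k‖ ^ 2 / (2 * CSig * h ^ 2))
            * (C₁ * Real.exp (b * ‖x - μ k‖ ^ 2) * h ^ m) :=
          mul_le_mul_of_nonneg_left h1 (Real.exp_pos _).le
      _ = C₁ * h ^ m * (Real.exp (-‖x - μ k‖ ^ 2 / (2 * CSig * h ^ 2))
            * Real.exp (b * ‖x - μ k‖ ^ 2)) := by ring
      _ = C₁ * h ^ m * Real.exp (-b * ‖x - μ k‖ ^ 2) := by
          rw [← Real.exp_add]
          congr 1
          rw [hbdef]; field_simp [hh.ne', hCSig.ne']; ring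
  have step2 := sum_gaussian_le μ hr hb hsep' x
  have hb2 : b * r ^ 2 = 1 / (4 * CSig * ρ ^ 2) := by
    rw [hbdef, hrdef]; field_simp [hh.ne', hCSig.ne', hρ0.ne']
  have hpl : (π / (b / 2)) ^ ((d : ℝ) / 2) = (8 * π * CSig) ^ ((d : ℝ) / 2) * h ^ d := by
    have h1 : π / (b / 2) = (8 * π * CSig) * h ^ 2 := by
      rw [hbdef]; field_simp [hh.ne', hCSig.ne']; ring
    rw [h1, Real.mul_rpow (by positivity) (by positivity)]
    congr 1
    rw [← Real.rpow_natCast h 2, ← Real.rpow_mul hh.le,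
      show ((2:ℕ):ℝ) * ((d : ℝ) / 2) = (d : ℝ) by push_cast; ring, Real.rpow_natCast]
  calc ∑ k, Real.exp (-‖x - μ k‖ ^ 2 / (2 * CSig * h ^ 2)) * ‖x - μ k‖ ^ m
      ≤ ∑ k, C₁ * h ^ m * Real.exp (-b * ‖x - μ k‖ ^ 2) :=
        Finset.sum_le_sum fun k _ => step1 k
    _ = C₁ * h ^ m * ∑ k, Real.exp (-b * ‖x - μ k‖ ^ 2) := by rw [← Finset.mul_sum]
    _ ≤ C₁ * h ^ m * (Real.exp (b * r ^ 2) * (π / (b / 2)) ^ ((d : ℝ) / 2) / (r ^ d * κ)) := by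
        refine mul_le_mul_of_nonneg_left step2 ?_
        positivity
    _ = C₁ * (Real.exp (1 / (4 * CSig * ρ ^ 2)) * (8 * π * CSig) ^ ((d : ℝ) / 2)
          * ρ ^ d / κ) * h ^ m := by
        rw [hb2, hpl, hrdef, div_pow]
        have hhd : (h : ℝ) ^ d ≠ 0 := by positivity
        have hρd : (ρ : ℝ) ^ d ≠ 0 := by positivity
        field_simp [hhd, hρd, hκpos.ne']
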